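/- Bounded difference property of the maximal batched generalization error: let l be λ-Lipschitz (with respect to the Euclidean norm on ℝ²) and suppose all f ∈ F and all labels take values in [a,b]. Define φ_k(Z) = sup_{f∈F} ( r_k(f,D) − r_k(f,Z) ), where r_k(f,Z) averages l over all k-subsets of the n-point set Z. Then for any two datasets Z, Z' differing in exactly one point, |φ_k(Z) − φ_k(Z')| ≤ √2 · λ · |a−b| / n. -/

import Mathlib

open MeasureTheory

lemma card_subsets_containing {n k : ℕ} (hk : 1 ≤ k) (j : Fin n) :
    ((Finset.powersetCard k (Finset.univ : Finset (Fin n))).filter (fun S => j ∈ S)).card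
      = (n - 1).choose (k - 1) := by
  have h1 : ((Finset.univ : Finset (Fin n)).erase j).card = n - 1 := by
    rw [Finset.card_erase_of_mem (Finset.mem_univ j), Finset.card_univ, Fintype.card_fin]
  rw [← h1, ← Finset.card_powersetCard (k - 1) ((Finset.univ : Finset (Fin n)).erase j)]
  refine Finset.card_bij' (fun S _ => S.erase j) (fun T _ => insert j T) ?hi ?hj ?li ?ri
  case hi =>
    intro S hS
    simp only [Finset.mem_filter, Finset.mem_powersetCard] at hS
    rw [Finset.mem_powersetCard]
    refine ⟨Finset.erase_subset_erase j hS.1.1, ?_⟩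
    rw [Finset.card_erase_of_mem hS.2, hS.1.2]
  case hj =>
    intro T hT
    rw [Finset.mem_powersetCard] at hT
    have hjT : j ∉ T := fun h => (Finset.mem_erase.mp (hT.1 h)).1 rfl
    simp only [Finset.mem_filter, Finset.mem_powersetCard]
    refine ⟨⟨Finset.subset_univ _, ?_⟩, Finset.mem_insert_self j T⟩
    rw [Finset.card_insert_of_notMem hjT, hT.2]
    omega
  case li =>
    intro S hS
    simp only [Finset.mem_filter] at hS
    exact Finset.insert_erase hS.2
  case ri =>
    intro T hT
    rw [Finset.mem_powersetCard] at hT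
    exact Finset.erase_insert (fun h => (Finset.mem_erase.mp (hT.1 h)).1 rfl)

/-- bounded difference property of the maximal batched
generalization error `φ_k(Z) = sup_{f∈F} (r_k(f,D) − r_k(f,Z))` : if the loss is
`λ`-Lipschitz on `ℝ²` and all hypotheses and labels take values in `[a,b]`, then
two datasets differing in a single point satisfy
`|φ_k(Z) − φ_k(Z')| ≤ √2 · λ · |a−b| / n`. -/
theorem batched_generalization_bounded_difference
    {X : Type*} [MeasurableSpace X]
    (D : Measure (X × ℝ)) [IsProbabilityMeasure D]
    (F : Set (X → ℝ)) (hF : F.Nonempty)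
    (a b : ℝ)
    (hFab : ∀ f ∈ F, ∀ x, f x ∈ Set.Icc (min a b) (max a b))
    (l : ℝ × ℝ → ℝ) (lam : ℝ) (hlam : 0 ≤ lam)
    (hlip : ∀ p q : ℝ × ℝ, |l p - l q| ≤ lam * dist p q)
    (n k : ℕ) (hk : 1 ≤ k) (hkn : k ≤ n)
    (riskD : (X → ℝ) → ℝ)
    (hriskD : ∀ f ∈ F, riskD f =
      ∫ w : Fin k → X × ℝ,
        l ((∑ i, f (w i).1) / k, (∑ i, (w i).2) / k)
        ∂(Measure.pi fun _ : Fin k => D))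
    (riskEmp : (X → ℝ) → (Fin n → X × ℝ) → ℝ)
    (hriskEmp : ∀ f Z, riskEmp f Z =
      (∑ S ∈ Finset.powersetCard k (Finset.univ : Finset (Fin n)),
          l ((∑ i ∈ S, f (Z i).1) / k, (∑ i ∈ S, (Z i).2) / k)) /
        (n.choose k : ℝ))
    (φ : (Fin n → X × ℝ) → ℝ)
    (hφ : ∀ Z, φ Z = sSup {r : ℝ | ∃ f ∈ F, r = riskD f - riskEmp f Z})
    (hbdd : ∀ Z : Fin n → X × ℝ,
      BddAbove {r : ℝ | ∃ f ∈ F, r = riskD f - riskEmp f Z})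
    (Z Z' : Fin n → X × ℝ)
    (hlabels : ∀ i, (Z i).2 ∈ Set.Icc (min a b) (max a b) ∧
      (Z' i).2 ∈ Set.Icc (min a b) (max a b))
    (j : Fin n) (hdiff : ∀ i, i ≠ j → Z i = Z' i) :
    |φ Z - φ Z'| ≤ Real.sqrt 2 * lam * |a - b| / n := by
  have hn : 1 ≤ n := le_trans hk hkn
  have hk0 : (0:ℝ) < k := by exact_mod_cast hk
  have hn0 : (0:ℝ) < n := by exact_mod_cast hn
  have hC0 : (0:ℝ) < n.choose k := by exact_mod_cast Nat.choose_pos hkn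
  set c : ℝ := Real.sqrt 2 * lam * |a - b| / n with hc
  have hsqrt2 : (1:ℝ) ≤ Real.sqrt 2 := by
    rw [show (1:ℝ) = Real.sqrt 1 by simp]
    exact Real.sqrt_le_sqrt (by norm_num)
  have habs : ∀ x y : ℝ, x ∈ Set.Icc (min a b) (max a b) →
      y ∈ Set.Icc (min a b) (max a b) → |x - y| ≤ |a - b| := by
    intro x y hx hy
    refine le_trans (abs_sub_le_iff.mpr ⟨?_, ?_⟩) (le_of_eq (by rw [max_sub_min_eq_abs, abs_sub_comm] : max a b - min a b = |a - b|)) <;>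
      · have := hx.1; have := hx.2; have := hy.1; have := hy.2; linarith
  have habs2 : |a - b| ≤ Real.sqrt 2 * |a - b| :=
    le_mul_of_one_le_left (abs_nonneg _) hsqrt2
  -- key one-sided bound over two datasets differing only at j
  have key : ∀ f ∈ F, ∀ W W' : Fin n → X × ℝ, (∀ i, i ≠ j → W i = W' i) →
      (∀ i, (W i).2 ∈ Set.Icc (min a b) (max a b) ∧
        (W' i).2 ∈ Set.Icc (min a b) (max a b)) →
      riskEmp f W' - riskEmp f W ≤ c := by
    intro f hf W W' hWd hWl
    have hfab := hFab f hf
    rw [hriskEmp, hriskEmp, div_sub_div_same, ← Finset.sum_sub_distrib]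
    have hterm : ∀ S ∈ Finset.powersetCard k (Finset.univ : Finset (Fin n)),
        l ((∑ i ∈ S, f (W' i).1) / k, (∑ i ∈ S, (W' i).2) / k) -
          l ((∑ i ∈ S, f (W i).1) / k, (∑ i ∈ S, (W i).2) / k) ≤
        (if j ∈ S then lam * (Real.sqrt 2 * |a - b| / k) else 0) := by
      intro S hS
      by_cases hjS : j ∈ S
      · rw [if_pos hjS]
        refine le_trans (le_abs_self _) (le_trans (hlip _ _) ?_)
        have hd1 : ∑ i ∈ S, f (W' i).1 - ∑ i ∈ S, f (W i).1
            = f (W' j).1 - f (W j).1 := by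
          rw [← Finset.sum_sub_distrib, Finset.sum_eq_single_of_mem j hjS]
          intro i _ hij
          rw [hWd i hij]; ring
        have hd2 : ∑ i ∈ S, (W' i).2 - ∑ i ∈ S, (W i).2
            = (W' j).2 - (W j).2 := by
          rw [← Finset.sum_sub_distrib, Finset.sum_eq_single_of_mem j hjS]
          intro i _ hij
          rw [hWd i hij]; ring
        have hWl1 : |f (W' j).1 - f (W j).1| ≤ Real.sqrt 2 * |a - b| :=
          le_trans (habs _ _ (hfab _) (hfab _)) habs2
        have hWl2 : |(W' j).2 - (W j).2| ≤ Real.sqrt 2 * |a - b| :=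
          le_trans (habs _ _ (hWl j).2 (hWl j).1) habs2
        have hdist : dist ((∑ i ∈ S, f (W' i).1) / (k:ℝ), (∑ i ∈ S, (W' i).2) / (k:ℝ))
            ((∑ i ∈ S, f (W i).1) / (k:ℝ), (∑ i ∈ S, (W i).2) / (k:ℝ))
            ≤ Real.sqrt 2 * |a - b| / k := by
          rw [Prod.dist_eq]
          apply max_le
          · rw [Real.dist_eq, div_sub_div_same, hd1, abs_div, abs_of_pos hk0]
            gcongr
          · rw [Real.dist_eq, div_sub_div_same, hd2, abs_div, abs_of_pos hk0]
            gcongr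
        exact mul_le_mul_of_nonneg_left hdist hlam
      · rw [if_neg hjS]
        have heq : ∀ i ∈ S, W i = W' i := fun i hi => hWd i (fun h => hjS (h ▸ hi))
        have e1 : ∑ i ∈ S, f (W' i).1 = ∑ i ∈ S, f (W i).1 :=
          Finset.sum_congr rfl (fun i hi => by rw [heq i hi])
        have e2 : ∑ i ∈ S, (W' i).2 = ∑ i ∈ S, (W i).2 :=
          Finset.sum_congr rfl (fun i hi => by rw [heq i hi])
        rw [e1, e2]
        simp
    have hsum := Finset.sum_le_sum hterm
    have hcount : ∑ S ∈ Finset.powersetCard k (Finset.univ : Finset (Fin n)),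
        (if j ∈ S then lam * (Real.sqrt 2 * |a - b| / k) else 0)
        = ((n-1).choose (k-1) : ℝ) * (lam * (Real.sqrt 2 * |a - b| / k)) := by
      rw [← Finset.sum_filter, Finset.sum_const, card_subsets_containing hk j,
        nsmul_eq_mul]
    have hnat : n * (n-1).choose (k-1) = n.choose k * k := by
      obtain ⟨k', rfl⟩ : ∃ k', k = k' + 1 := ⟨k - 1, by omega⟩
      obtain ⟨n', rfl⟩ : ∃ n', n = n' + 1 := ⟨n - 1, by omega⟩
      simpa using Nat.add_one_mul_choose_eq n' k'
    have hcast : (n:ℝ) * ((n-1).choose (k-1) : ℝ) = (n.choose k : ℝ) * k := by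
      exact_mod_cast hnat
    have hfinal : (((n-1).choose (k-1) : ℝ) * (lam * (Real.sqrt 2 * |a - b| / k))) /
        (n.choose k : ℝ) = c := by
      rw [hc]
      field_simp
      linear_combination lam * |a - b| * hcast
    rw [← hfinal]
    gcongr
    exact le_trans hsum (le_of_eq hcount)
  -- combine via sSup
  have hub : ∀ W W' : Fin n → X × ℝ, (∀ i, i ≠ j → W i = W' i) →
      (∀ i, (W i).2 ∈ Set.Icc (min a b) (max a b) ∧
        (W' i).2 ∈ Set.Icc (min a b) (max a b)) →
      φ W' - φ W ≤ c := by
    intro W W' hWd hWl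
    rw [sub_le_iff_le_add, hφ W']
    apply csSup_le
    · obtain ⟨f, hf⟩ := hF
      exact ⟨_, f, hf, rfl⟩
    · rintro r ⟨f, hf, rfl⟩
      have h1 : riskD f - riskEmp f W' ≤ (riskD f - riskEmp f W) + c := by
        have := key f hf W' W (fun i hi => (hWd i hi).symm)
          (fun i => ⟨(hWl i).2, (hWl i).1⟩)
        linarith
      have h2 : riskD f - riskEmp f W ≤ φ W := by
        rw [hφ W]
        exact le_csSup (hbdd W) ⟨f, hf, rfl⟩
      linarith
  have hlabels' : ∀ i, (Z' i).2 ∈ Set.Icc (min a b) (max a b) ∧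
      (Z i).2 ∈ Set.Icc (min a b) (max a b) := fun i => ⟨(hlabels i).2, (hlabels i).1⟩
  rw [abs_sub_le_iff]
  constructor
  · exact hub Z' Z (fun i hi => (hdiff i hi).symm) hlabels'
  · exact hub Z Z' hdiff hlabels
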